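/- arXiv:0911.0134 — 4 statements merged into one kernel-verified Lean document; each statement's English description precedes it below -/
import Mathlib

section
/- Let E be an oriented tree set in a connected infinite graph X with M = max{diam(∂C) : C ∈ E} < ∞. If some element of E is not contained in a maximal element of E, then there is a strictly increasing sequence (C_k) in E whose union is all of X, and every C ∈ E satisfies C ⊆ C_k for some k. -/
def graphBoundary {V : Type*} (G : SimpleGraph V) (C : Set V) : Set V :=
  {x | x ∈ C ∧ ∃ y, y ∉ C ∧ G.Adj x y}

def IsCut {V : Type*} (G : SimpleGraph V) (C : Set V) : Prop :=
  C.Infinite ∧ (G.induce C).Connected ∧ (graphBoundary G C).Finite ∧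
    (graphBoundary G C).Nonempty

def NonCrossing {V : Type*} (C D : Set V) : Prop :=
  C ⊆ D ∨ D ⊆ C ∨ C ∩ D = ∅

def IsTreeSet {V : Type*} (G : SimpleGraph V) (E : Set (Set V)) : Prop :=
  E.Nonempty ∧ (∀ C ∈ E, IsCut G C) ∧
    ∀ C ∈ E, ∀ D ∈ E, C ≠ D → NonCrossing C D

section Aux

variable {V : Type*} {G : SimpleGraph V}

/-- Balls are finite in a connected locally finite graph. -/
lemma ball_finite (hconn : G.Connected) (hlf : G.LocallyFinite) (x : V) (n : ℕ) :
    {y | G.dist x y ≤ n}.Finite := by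
  induction n with
  | zero =>
    refine Set.Finite.subset (Set.finite_singleton x) ?_
    intro y hy
    simp only [Set.mem_setOf_eq, Nat.le_zero] at hy
    rcases (SimpleGraph.dist_eq_zero_iff_eq_or_not_reachable.mp hy) with h | h
    · simp [h.symm]
    · exact absurd (hconn.preconnected x y) h
  | succ n ih =>
    have hfin : (⋃ z ∈ {y | G.dist x y ≤ n}, G.neighborSet z).Finite := by
      refine Set.Finite.biUnion ih fun z _ => ?_
      haveI := hlf z
      exact (G.neighborSet z).toFinite
    refine Set.Finite.subset (ih.union hfin) ?_
    intro y hy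
    simp only [Set.mem_setOf_eq] at hy
    by_cases hle : G.dist x y ≤ n
    · exact Or.inl hle
    · have hd : G.dist y x = n + 1 := by
        rw [SimpleGraph.dist_comm]; omega
      obtain ⟨p, hp⟩ := (hconn.preconnected y x).exists_walk_length_eq_dist
      rw [hd] at hp
      cases p with
      | nil => simp at hp
      | cons h q =>
        rename_i z
        have hz : z ∈ {y | G.dist x y ≤ n} := by
          have := SimpleGraph.dist_le q.reverse
          simp only [SimpleGraph.Walk.length_reverse] at this
          simp only [SimpleGraph.Walk.length_cons] at hp
          simp only [Set.mem_setOf_eq]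
          omega
        exact Or.inr (Set.mem_biUnion hz h.symm)

/-- First entry of a walk into a set `S`: there is an edge `x y` with `y ∈ S`
and a walk from the start to `x` avoiding `S`. -/
lemma exists_first_entry {S : Set V} : ∀ {u w : V} (p : G.Walk u w), u ∉ S → w ∈ S →
    ∃ x y, G.Adj x y ∧ y ∈ S ∧ ∃ q : G.Walk u x, ∀ z ∈ q.support, z ∉ S := by
  intro u w p
  induction p with
  | nil => intro hu hw; exact absurd hw hu
  | @cons a b c hab p ih =>
    intro hu hw
    by_cases hb : b ∈ S
    · exact ⟨a, b, hab, hb, SimpleGraph.Walk.nil, by simpa using hu⟩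
    · obtain ⟨x, y, hxy, hy, q, hq⟩ := ih hb hw
      refine ⟨x, y, hxy, hy, SimpleGraph.Walk.cons hab q, ?_⟩
      intro z hz
      rw [SimpleGraph.Walk.support_cons, List.mem_cons] at hz
      rcases hz with rfl | hz
      · exact hu
      · exact hq z hz

/-- A cut with boundary inside `S` is determined (among such cuts) by its
intersection with `S' ⊇ S ∪ N(S)`. -/
lemma cut_subset_of_inter_eq (hconn : G.Connected) {C D S S' : Set V}
    (hS : S.Nonempty) (hSS' : S ⊆ S') (hN : ∀ x y, G.Adj x y → y ∈ S → x ∈ S')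
    (hBC : graphBoundary G C ⊆ S) (hBD : graphBoundary G D ⊆ S)
    (heq : C ∩ S' = D ∩ S') : C ⊆ D := by
  intro v hv
  by_contra hvD
  have hvS' : v ∉ S' := by
    intro h
    have : v ∈ D ∩ S' := heq ▸ (⟨hv, h⟩ : v ∈ C ∩ S')
    exact hvD this.1
  have hvS : v ∉ S := fun h => hvS' (hSS' h)
  obtain ⟨s, hs⟩ := hS
  obtain ⟨p⟩ := hconn.preconnected v s
  obtain ⟨x, y, hxy, hy, q, hq⟩ := exists_first_entry p hvS hs
  have hxC : x ∈ C := by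
    by_contra hxC
    obtain ⟨d, hd, hd1, hd2⟩ := q.exists_boundary_dart C hv hxC
    exact hq d.fst (SimpleGraph.Walk.dart_fst_mem_support_of_mem_darts q hd)
      (hBC ⟨hd1, d.snd, hd2, d.adj⟩)
  have hxD : x ∉ D := by
    intro hxD
    obtain ⟨d, hd, hd1, hd2⟩ := q.reverse.exists_boundary_dart D hxD hvD
    have hmem : d.fst ∈ q.support := by
      have := SimpleGraph.Walk.dart_fst_mem_support_of_mem_darts q.reverse hd
      rwa [SimpleGraph.Walk.support_reverse, List.mem_reverse] at this
    exact hq d.fst hmem (hBD ⟨hd1, d.snd, hd2, d.adj⟩)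
  have : x ∈ D ∩ S' := heq ▸ (⟨hxC, hN x y hxy hy⟩ : x ∈ C ∩ S')
  exact hxD this.1

end Aux

/-- If an oriented tree set (with uniformly bounded boundary diameters) has an element
that is not contained in any maximal element, then there is a strictly increasing
sequence in `E` exhausting `X`, and every element of `E` lies in some member of
the sequence. -/
theorem stmt1 {V : Type*} [Infinite V] (G : SimpleGraph V)
    (hconn : G.Connected) (hlf : G.LocallyFinite)
    (E : Set (Set V)) (hE : IsTreeSet G E)
    (M : ℕ)
    (hM : ∀ C ∈ E, ∀ x ∈ graphBoundary G C, ∀ y ∈ graphBoundary G C,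
      G.dist x y ≤ M)
    (hnomax : ∃ C ∈ E, ∀ D ∈ E, C ⊆ D → (∃ D' ∈ E, D ⊂ D')) :
    ∃ Cseq : ℕ → Set V, (∀ k, Cseq k ∈ E) ∧ StrictMono Cseq ∧
      (⋃ k, Cseq k) = Set.univ ∧ ∀ C ∈ E, ∃ k, C ⊆ Cseq k := by
  classical
  obtain ⟨hEne, hcut, hnc⟩ := hE
  obtain ⟨C0, hC0E, hC0⟩ := hnomax
  -- build the strictly increasing sequence
  have step : ∀ D : Set V, D ∈ E → C0 ⊆ D → ∃ D', D' ∈ E ∧ C0 ⊆ D' ∧ D ⊂ D' := by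
    intro D hD hs
    obtain ⟨D', hD', hlt⟩ := hC0 D hD hs
    exact ⟨D', hD', hs.trans hlt.subset, hlt⟩
  choose next hnextE hnextC0 hnextlt using step
  let f : ℕ → {D : Set V // D ∈ E ∧ C0 ⊆ D} := fun k =>
    Nat.rec ⟨C0, hC0E, subset_rfl⟩
      (fun _ p => ⟨next p.1 p.2.1 p.2.2, hnextE p.1 p.2.1 p.2.2, hnextC0 p.1 p.2.1 p.2.2⟩) k
  set Cseq : ℕ → Set V := fun k => (f k).1 with hCseq
  have hmemE : ∀ k, Cseq k ∈ E := fun k => (f k).2.1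
  have hsucc : ∀ k, Cseq k ⊂ Cseq (k + 1) := fun k => hnextlt (f k).1 (f k).2.1 (f k).2.2
  have hstrict : StrictMono Cseq := strictMono_nat_of_lt_succ hsucc
  have hC0sub : ∀ k, C0 ⊆ Cseq k := fun k => (f k).2.2
  -- union is everything
  have huniv : (⋃ k, Cseq k) = Set.univ := by
    rw [Set.eq_univ_iff_forall]
    intro v
    by_contra hv
    simp only [Set.mem_iUnion, not_exists] at hv
    obtain ⟨x0, hx0⟩ := ((hcut C0 hC0E).1).nonempty
    obtain ⟨W⟩ := hconn.preconnected x0 v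
    set S : Set V := ⋃ w ∈ {z | z ∈ W.support}, {z | G.dist w z ≤ M} with hSdef
    have hSfin : S.Finite := by
      refine Set.Finite.biUnion (List.finite_toSet W.support) fun w _ => ?_
      exact ball_finite hconn hlf w M
    have hSne : S.Nonempty := by
      refine ⟨x0, Set.mem_biUnion (W.start_mem_support) ?_⟩
      simp [SimpleGraph.dist_self]
    set S' : Set V := S ∪ ⋃ y ∈ S, G.neighborSet y with hS'def
    have hS'fin : S'.Finite := by
      refine hSfin.union (Set.Finite.biUnion hSfin fun y _ => ?_)
      haveI := hlf y
      exact (G.neighborSet y).toFinite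
    have hSS' : S ⊆ S' := Set.subset_union_left
    have hN : ∀ x y, G.Adj x y → y ∈ S → x ∈ S' :=
      fun x y hxy hy => Or.inr (Set.mem_biUnion hy hxy.symm)
    -- each boundary lies in S
    have hBS : ∀ k, graphBoundary G (Cseq k) ⊆ S := by
      intro k
      have hx0k : x0 ∈ Cseq k := hC0sub k hx0
      obtain ⟨d, hd, hd1, hd2⟩ := W.exists_boundary_dart (Cseq k) hx0k (hv k)
      intro z hz
      refine Set.mem_biUnion (SimpleGraph.Walk.dart_fst_mem_support_of_mem_darts W hd) ?_
      exact hM (Cseq k) (hmemE k) d.fst ⟨hd1, d.snd, hd2, d.adj⟩ z hz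
    -- the map k ↦ Cseq k ∩ S' is injective
    have hinj : Function.Injective (fun k => Cseq k ∩ S') := by
      intro j k hjk
      by_contra hne
      rcases Ne.lt_or_gt hne with h | h
      · exact (hstrict h).2
          (cut_subset_of_inter_eq hconn hSne hSS' hN (hBS k) (hBS j) hjk.symm)
      · exact (hstrict h).2
          (cut_subset_of_inter_eq hconn hSne hSS' hN (hBS j) (hBS k) hjk)
    have hrange : Set.range (fun k => Cseq k ∩ S') ⊆ {T | T ⊆ S'} := by
      rintro T ⟨k, rfl⟩
      exact Set.inter_subset_right
    exact (hS'fin.finite_subsets.subset hrange).not_infinite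
      (Set.infinite_range_of_injective hinj)
  refine ⟨Cseq, hmemE, hstrict, huniv, ?_⟩
  -- every element of E is contained in some Cseq k
  intro C hCE
  by_contra hnot
  simp only [not_exists] at hnot
  obtain ⟨x, hx⟩ := ((hcut C hCE).1).nonempty
  have hxU : x ∈ ⋃ k, Cseq k := huniv ▸ Set.mem_univ x
  obtain ⟨k0, hk0⟩ := Set.mem_iUnion.mp hxU
  have hsub : ∀ k, k0 ≤ k → Cseq k ⊆ C := by
    intro k hk
    have hxk : x ∈ Cseq k := hstrict.monotone hk hk0
    have hne : C ≠ Cseq k := by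
      rintro rfl
      exact hnot k subset_rfl
    rcases hnc C hCE (Cseq k) (hmemE k) hne with h | h | h
    · exact absurd h (hnot k)
    · exact h
    · exact absurd (h ▸ ⟨hx, hxk⟩ : x ∈ (∅ : Set V)) (Set.notMem_empty x)
  have hCuniv : C = Set.univ := by
    rw [Set.eq_univ_iff_forall]
    intro y
    have hyU : y ∈ ⋃ k, Cseq k := huniv ▸ Set.mem_univ y
    obtain ⟨k, hk⟩ := Set.mem_iUnion.mp hyU
    exact hsub (max k k0) (le_max_right _ _) (hstrict.monotone (le_max_left _ _) hk)
  obtain ⟨z, _, y, hyC, _⟩ := ((hcut C hCE).2.2.2)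
  exact hyC (hCuniv ▸ Set.mem_univ y)
end

section
/- Let E be an oriented tree set of cuts in a connected graph X. For any C ∈ E and any vertex x ∈ C, the set {C' ∈ E : x ∈ C' ⊆ C} is finite; and for any C, D ∈ E with D ⊆ C, the set {C' ∈ E : D ⊆ C' ⊆ C} is finite. -/
open SimpleGraph

/-- Balls in connected locally finite graphs are finite. -/
lemma aux_ball_finite {V : Type*} (G : SimpleGraph V) (hconn : G.Connected)
    (hlf : G.LocallyFinite) (p : V) (n : ℕ) : {v | G.dist p v ≤ n}.Finite := by
  induction n with
  | zero =>
    apply Set.Finite.subset (Set.finite_singleton p)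
    intro v hv
    simp only [Set.mem_setOf_eq, Nat.le_zero] at hv
    have := (hconn p v).dist_eq_zero_iff.mp hv
    simp [this.symm]
  | succ n ih =>
    have hnb : ∀ u : V, (G.neighborSet u).Finite := fun u => by
      haveI := hlf u; exact (G.neighborSet u).toFinite
    apply Set.Finite.subset (ih.union (ih.biUnion (fun u _ => hnb u)))
    intro v hv
    simp only [Set.mem_setOf_eq] at hv
    rcases Nat.lt_or_ge (G.dist p v) (n+1) with h | h
    · exact Or.inl (Nat.lt_succ_iff.mp h)
    · have hd : G.dist v p = n + 1 := by rw [G.dist_comm]; exact le_antisymm hv h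
      obtain ⟨w, hw⟩ := (hconn v p).exists_walk_length_eq_dist
      rw [hd] at hw
      cases w with
      | nil => simp at hw
      | @cons _ u _ h' q =>
        right
        refine Set.mem_biUnion (x := u) ?_ h'.symm
        simp only [Set.mem_setOf_eq]
        have h2 : G.dist u p ≤ q.length := G.dist_le q
        have h3 : q.length = n := by simpa [Walk.length_cons] using hw
        rw [G.dist_comm]
        omega

/-- A walk from inside a set to outside it passes through the boundary. -/
lemma aux_cross {V : Type*} (G : SimpleGraph V) (A : Set V) :
    ∀ {x y : V}, ∀ w : G.Walk x y, x ∈ A → y ∉ A →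
      ∃ a ∈ w.support, a ∈ graphBoundary G A := by
  intro x y w
  induction w with
  | nil => intro hx hy; exact absurd hx hy
  | @cons a b c h q ih =>
    intro hx hy
    by_cases hb : b ∈ A
    · obtain ⟨u, hu, hu2⟩ := ih hb hy
      exact ⟨u, by simp [Walk.support_cons, hu], hu2⟩
    · exact ⟨a, by simp [Walk.support_cons], hx, b, hb, h⟩

/-- A connected set with nonempty boundary contained in `T`, whose intersection with a large
enough `T` agrees with another set's, is contained in that other set. -/
lemma aux_subset {V : Type*} (G : SimpleGraph V) {C₁ C₂ T : Set V}
    (hc : (G.induce C₁).Connected) (hbne : (graphBoundary G C₁).Nonempty)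
    (hb1 : graphBoundary G C₁ ⊆ T)
    (hb2 : ∀ u ∈ graphBoundary G C₂, ∀ v, G.Adj u v → v ∈ T)
    (heq : C₁ ∩ T = C₂ ∩ T) : C₁ ⊆ C₂ := by
  intro v hv
  obtain ⟨b, hb⟩ := hbne
  have hbC2 : b ∈ C₂ := by
    have : b ∈ C₁ ∩ T := ⟨hb.1, hb1 hb⟩
    rw [heq] at this; exact this.1
  have key : ∀ (a c : C₁), (G.induce C₁).Walk a c → (c : V) ∈ C₂ → (a : V) ∈ C₂ := by
    intro a c w
    induction w with
    | nil => exact id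
    | @cons a a' c h q ih =>
      intro hcC2
      have ha' : (a' : V) ∈ C₂ := ih hcC2
      by_contra haC2
      have hadj : G.Adj (a : V) (a' : V) := h
      have : (a' : V) ∈ graphBoundary G C₂ := ⟨ha', a, haC2, hadj.symm⟩
      have haT : (a : V) ∈ T := hb2 _ this _ hadj.symm
      have : (a : V) ∈ C₁ ∩ T := ⟨a.2, haT⟩
      rw [heq] at this
      exact haC2 this.1
  obtain ⟨w⟩ := hc.preconnected ⟨v, hv⟩ ⟨b, hb.1⟩
  exact key _ _ w hbC2

/-- In an oriented tree set with uniformly bounded boundary diameters of a connected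
locally finite graph: for `C ∈ E` and `x ∈ C`, the family of cuts of `E` between `x`
and `C` is finite; and for nested `D ⊆ C` in `E`, the family of cuts of `E` between
`D` and `C` is finite. -/
theorem stmt2 {V : Type*} [Infinite V] (G : SimpleGraph V)
    (hconn : G.Connected) (hlf : G.LocallyFinite)
    (E : Set (Set V)) (hE : IsTreeSet G E)
    (M : ℕ)
    (hM : ∀ C ∈ E, ∀ x ∈ graphBoundary G C, ∀ y ∈ graphBoundary G C,
      G.dist x y ≤ M) :
    (∀ C ∈ E, ∀ x ∈ C, {C' | C' ∈ E ∧ x ∈ C' ∧ C' ⊆ C}.Finite) ∧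
      (∀ C ∈ E, ∀ D ∈ E, D ⊆ C → {C' | C' ∈ E ∧ D ⊆ C' ∧ C' ⊆ C}.Finite) := by
  have main : ∀ C ∈ E, ∀ x ∈ C, {C' | C' ∈ E ∧ x ∈ C' ∧ C' ⊆ C}.Finite := by
    intro C hC x hx
    obtain ⟨z, _, y, hyC, hyadj⟩ := (hE.2.1 C hC).2.2.2
    obtain ⟨W⟩ := hconn x y
    -- finite set S covering all boundaries of cuts in the family
    set S : Set V := ⋃ p ∈ {p | p ∈ W.support}, {v | G.dist p v ≤ M} with hS
    have hSfin : S.Finite :=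
      Set.Finite.biUnion (W.support.finite_toSet) (fun p _ => aux_ball_finite G hconn hlf p M)
    set T : Set V := S ∪ ⋃ u ∈ S, G.neighborSet u with hT
    have hTfin : T.Finite := hSfin.union (hSfin.biUnion (fun u _ => by
      haveI := hlf u; exact (G.neighborSet u).toFinite))
    -- boundaries of all members of the family lie in S
    have hbS : ∀ C' ∈ {C' | C' ∈ E ∧ x ∈ C' ∧ C' ⊆ C}, graphBoundary G C' ⊆ S := by
      rintro C' ⟨hC'E, hxC', hC'C⟩ b hb
      have hyC' : y ∉ C' := fun h => hyC (hC'C h)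
      obtain ⟨w0, hw0sup, hw0b⟩ := aux_cross G C' W hxC' hyC'
      have hd : G.dist w0 b ≤ M := hM C' hC'E w0 hw0b b hb
      exact Set.mem_biUnion hw0sup hd
    have hST : S ⊆ T := Set.subset_union_left
    have hnbr : ∀ C' ∈ {C' | C' ∈ E ∧ x ∈ C' ∧ C' ⊆ C},
        ∀ u ∈ graphBoundary G C', ∀ v, G.Adj u v → v ∈ T := by
      intro C' hC' u hu v hadj
      exact Or.inr (Set.mem_biUnion (hbS C' hC' hu) hadj)
    -- the map C' ↦ C' ∩ T is injective on the family
    have hinj : Set.InjOn (fun C' => C' ∩ T) {C' | C' ∈ E ∧ x ∈ C' ∧ C' ⊆ C} := by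
      intro C₁ h₁ C₂ h₂ heq
      simp only at heq
      have hcut₁ := hE.2.1 C₁ h₁.1
      have hcut₂ := hE.2.1 C₂ h₂.1
      apply Set.Subset.antisymm
      · exact aux_subset G hcut₁.2.1 hcut₁.2.2.2 ((hbS C₁ h₁).trans hST)
          (hnbr C₂ h₂) heq
      · exact aux_subset G hcut₂.2.1 hcut₂.2.2.2 ((hbS C₂ h₂).trans hST)
          (hnbr C₁ h₁) heq.symm
    apply Set.Finite.of_finite_image ?_ hinj
    apply Set.Finite.subset hTfin.finite_subsets
    rintro t ⟨C', _, rfl⟩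
    exact Set.inter_subset_right
  refine ⟨main, ?_⟩
  intro C hC D hD hDC
  obtain ⟨x, hx⟩ := (hE.2.1 D hD).1.nonempty
  apply (main C hC x (hDC hx)).subset
  rintro C' ⟨h1, h2, h3⟩
  exact ⟨h1, h2 hx, h3⟩
end

section
/- Let C = (V, Σ, P, S) be an un-ambiguous context-free grammar without chain rules, μ : Σ → (0,∞), and for T ∈ V let f_T(z) = Σ_{w ∈ L_T} μ(w_1)⋯μ(w_n) z^{|w|} be the generating function of the language L_T generated by T. Then each f_T converges absolutely for μ(a)|z| < 1/|Σ| (all a), and the functions satisfy the algebraic system f_T(z) = Pol_T(z; (f_U(z))_{U∈V}), where Pol_T(z;y) = Σ_{u : T ⊢ u} ζ(u) with ζ(a) = μ(a)z for a ∈ Σ and ζ(U) = y_U for U ∈ V, extended multiplicatively over words. -/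
set_option maxHeartbeats 1000000


noncomputable section
open Classical

/-- A rightmost derivation step for the production set `P`: replace the rightmost
variable occurrence (the part to its right consists of terminals only) using a
production of `P`. -/
def RStep {Vr A : Type*} (P : Set (Vr × List (Vr ⊕ A)))
    (v w : List (Vr ⊕ A)) : Prop :=
  ∃ (T : Vr) (u v₁ v₂ : List (Vr ⊕ A)), (T, u) ∈ P ∧
    (∀ s ∈ v₂, ∃ a : A, s = Sum.inr a) ∧
    v = v₁ ++ Sum.inl T :: v₂ ∧ w = v₁ ++ u ++ v₂

/-- Rightmost derivability. -/
def RDerives {Vr A : Type*} (P : Set (Vr × List (Vr ⊕ A)))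
    (v w : List (Vr ⊕ A)) : Prop :=
  Relation.ReflTransGen (RStep P) v w

/-- The language `L_T` generated by the variable `T`. -/
def Lang {Vr A : Type*} (P : Set (Vr × List (Vr ⊕ A))) (T : Vr) :
    Set (List A) :=
  {w | RDerives P [Sum.inl T] (w.map Sum.inr)}

/-- The grammar is un-ambiguous: every word generated from a variable has a
unique rightmost derivation. -/
def UnAmbiguous {Vr A : Type*} (P : Set (Vr × List (Vr ⊕ A))) : Prop :=
  ∀ (T : Vr) (w : List A) (l₁ l₂ : List (List (Vr ⊕ A))),
    List.Chain' (RStep P) ([Sum.inl T] :: l₁) →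
    ([Sum.inl T] :: l₁).getLast (by simp) = w.map Sum.inr →
    List.Chain' (RStep P) ([Sum.inl T] :: l₂) →
    ([Sum.inl T] :: l₂).getLast (by simp) = w.map Sum.inr →
    l₁ = l₂

/-- The weight of a word `w`: `μ(w₁)⋯μ(w_n) z^{|w|}`. -/
def wordWeight {A : Type*} (μ : A → ℝ) (z : ℝ) (w : List A) : ℝ :=
  (w.map μ).prod * z ^ w.length

/-- The generating function `f_T(z) = Σ_{w ∈ L_T} μ(w₁)⋯μ(w_n) z^{|w|}`. -/
def fgen {Vr A : Type*} (P : Set (Vr × List (Vr ⊕ A))) (μ : A → ℝ)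
    (T : Vr) (z : ℝ) : ℝ :=
  ∑' w : List A, Set.indicator (Lang P T) (wordWeight μ z) w


lemma summable_W {A : Type*} [Fintype A] (g : A → ℝ) (hg : ∀ a, 0 ≤ g a)
    (hsum : ∑ a, g a < 1) : Summable (fun w : List A => (w.map g).prod) := by
  have key : Summable (fun p : Σ n : ℕ, Fin n → A => ((List.ofFn p.2).map g).prod) := by
    rw [summable_sigma_of_nonneg]
    · refine ⟨fun n => Summable.of_finite, ?_⟩
      have heq : ∀ n : ℕ, (∑' y : Fin n → A, ((List.ofFn y).map g).prod) = (∑ a, g a) ^ n := by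
        intro n
        rw [tsum_fintype, Fintype.sum_pow]
        exact Finset.sum_congr rfl (fun y _ => by rw [List.map_ofFn, List.prod_ofFn]; rfl)
      simp only [heq]
      exact summable_geometric_of_lt_one (Finset.sum_nonneg fun a _ => hg a) hsum
    · intro p
      exact List.prod_nonneg (by simp only [List.mem_map]; rintro x ⟨a, -, rfl⟩; exact hg a)
  refine ((List.equivSigmaTuple (α := A)).symm.summable_iff
    (f := fun w : List A => (w.map g).prod)).1 (key.congr ?_)
  intro p
  rfl


namespace Stmt13Aux
variable {Vr A : Type*} {P : Set (Vr × List (Vr ⊕ A))}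

lemma rstep_prepend (x : List (Vr ⊕ A)) {v w} (h : RStep P v w) :
    RStep P (x ++ v) (x ++ w) := by
  obtain ⟨T, u, v₁, v₂, hP, ht, rfl, rfl⟩ := h
  exact ⟨T, u, x ++ v₁, v₂, hP, ht, by simp, by simp⟩

lemma rstep_append_terminal (y : List A) {v w} (h : RStep P v w) :
    RStep P (v ++ y.map Sum.inr) (w ++ y.map Sum.inr) := by
  obtain ⟨T, u, v₁, v₂, hP, ht, rfl, rfl⟩ := h
  refine ⟨T, u, v₁, v₂ ++ y.map Sum.inr, hP, ?_, by simp, by simp⟩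
  intro s hs
  rcases List.mem_append.1 hs with hs | hs
  · exact ht s hs
  · obtain ⟨a, -, rfl⟩ := List.mem_map.1 hs
    exact ⟨a, rfl⟩

lemma no_rstep_terminal (y : List A) {v} : ¬ RStep P (y.map Sum.inr) v := by
  rintro ⟨T, u, v₁, v₂, -, -, heq, -⟩
  have : (Sum.inl T : Vr ⊕ A) ∈ y.map Sum.inr := by rw [heq]; simp
  simp at this

def IsTrace (P : Set (Vr × List (Vr ⊕ A))) (u : List (Vr ⊕ A))
    (l : List (List (Vr ⊕ A))) (w : List A) : Prop :=
  List.Chain' (RStep P) (u :: l) ∧ (u :: l).getLast (by simp) = w.map Sum.inr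

lemma isTrace_nil {u : List (Vr ⊕ A)} {w} : IsTrace P u [] w ↔ u = w.map Sum.inr := by
  simp [IsTrace, List.Chain', List.isChain_singleton]

lemma isTrace_cons {u x : List (Vr ⊕ A)} {l w} :
    IsTrace P u (x :: l) w ↔ RStep P u x ∧ IsTrace P x l w := by
  simp [IsTrace, List.Chain', List.isChain_cons_cons, List.getLast_cons_cons, and_assoc]

lemma IsTrace.word_eq {u : List (Vr ⊕ A)} {l w w'}
    (h : IsTrace P u l w) (h' : IsTrace P u l w') : w = w' := by
  have := h.2.symm.trans h'.2
  exact List.map_injective_iff.2 (fun a b => Sum.inr.inj) this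

lemma isTrace_terminal {y : List A} {l w} :
    IsTrace P (y.map Sum.inr) l w ↔ l = [] ∧ w = y := by
  constructor
  · intro h
    cases l with
    | nil => exact ⟨rfl, ((List.map_injective_iff.2 (fun a b => Sum.inr.inj)) (isTrace_nil.1 h).symm).symm ▸ rfl⟩
    | cons x l => exact absurd (isTrace_cons.1 h).1 (no_rstep_terminal y)
  · rintro ⟨rfl, rfl⟩
    exact isTrace_nil.2 rfl

lemma isTrace_combine {u₁ u₂ : List (Vr ⊕ A)} {l₁ l₂ w₁ w₂}
    (h₁ : IsTrace P u₁ l₁ w₁) (h₂ : IsTrace P u₂ l₂ w₂) :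
    IsTrace P (u₁ ++ u₂)
      (l₂.map (u₁ ++ ·) ++ l₁.map (· ++ w₂.map Sum.inr)) (w₁ ++ w₂) := by
  induction l₂ generalizing u₂ with
  | nil =>
    obtain rfl := isTrace_nil.1 h₂
    simp only [List.map_nil, List.nil_append]
    clear h₂
    induction l₁ generalizing u₁ with
    | nil =>
      obtain rfl := isTrace_nil.1 h₁
      exact isTrace_nil.2 (by simp)
    | cons x l₁ ih =>
      obtain ⟨hs, ht⟩ := isTrace_cons.1 h₁
      exact isTrace_cons.2 ⟨rstep_append_terminal w₂ hs, ih ht⟩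
  | cons x l₂ ih =>
    obtain ⟨hs, ht⟩ := isTrace_cons.1 h₂
    exact isTrace_cons.2 ⟨rstep_prepend u₁ hs, ih ht⟩

lemma list_all_inr {u : List (Vr ⊕ A)} (h : ∀ s ∈ u, ∃ a : A, s = Sum.inr a) :
    ∃ y : List A, u = y.map Sum.inr := by
  induction u with
  | nil => exact ⟨[], rfl⟩
  | cons s u ih =>
    obtain ⟨a, rfl⟩ := h s (by simp)
    obtain ⟨y, rfl⟩ := ih (fun s hs => h s (by simp [hs]))
    exact ⟨a :: y, rfl⟩

lemma isTrace_split {u₁ u₂ : List (Vr ⊕ A)} {L w}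
    (h : IsTrace P (u₁ ++ u₂) L w) :
    ∃ w₁ w₂ l₁ l₂, w = w₁ ++ w₂ ∧ IsTrace P u₁ l₁ w₁ ∧ IsTrace P u₂ l₂ w₂ ∧
      L = l₂.map (u₁ ++ ·) ++ l₁.map (· ++ w₂.map Sum.inr) := by
  induction L generalizing u₁ u₂ w with
  | nil =>
    have heq := isTrace_nil.1 h
    refine ⟨w.take u₁.length, w.drop u₁.length, [], [], by simp, ?_, ?_, by simp⟩
    · refine isTrace_nil.2 ?_
      have h1 : u₁ = (List.map Sum.inr w).take u₁.length := by rw [← heq]; simp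
      rwa [← List.map_take] at h1
    · refine isTrace_nil.2 ?_
      have h1 : u₂ = (List.map Sum.inr w).drop u₁.length := by rw [← heq]; simp
      rwa [← List.map_drop] at h1
  | cons x L ih =>
    obtain ⟨hs, ht⟩ := isTrace_cons.1 h
    obtain ⟨T, u, v₁, v₂, hP, hterm, heq, rfl⟩ := hs
    rcases List.append_eq_append_iff.1 heq with ⟨a', ha1, ha2⟩ | ⟨c', hc1, hc2⟩
    · -- v₁ = u₁ ++ a', u₂ = a' ++ inl T :: v₂ : rightmost variable inside u₂
      subst ha1 ha2
      have hx : (u₁ ++ a') ++ u ++ v₂ = u₁ ++ (a' ++ u ++ v₂) := by simp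
      rw [hx] at ht
      obtain ⟨w₁, w₂, l₁, l₂, rfl, t1, t2, rfl⟩ := ih ht
      exact ⟨w₁, w₂, l₁, (a' ++ u ++ v₂) :: l₂, rfl, t1,
        isTrace_cons.2 ⟨⟨T, u, a', v₂, hP, hterm, rfl, rfl⟩, t2⟩, by simp [hx]⟩
    · -- u₁ = v₁ ++ c', inl T :: v₂ = c' ++ u₂
      cases c' with
      | nil =>
        simp only [List.append_nil] at hc1
        subst hc1
        simp only [List.nil_append] at hc2
        subst hc2
        have hx : u₁ ++ u ++ v₂ = u₁ ++ ([] ++ u ++ v₂) := by simp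
        rw [hx] at ht
        obtain ⟨w₁, w₂, l₁, l₂, rfl, t1, t2, rfl⟩ := ih ht
        exact ⟨w₁, w₂, l₁, ([] ++ u ++ v₂) :: l₂, rfl, t1,
          isTrace_cons.2 ⟨⟨T, u, [], v₂, hP, hterm, rfl, rfl⟩, t2⟩, by simp [hx]⟩
      | cons s t =>
        obtain ⟨rfl, hv₂⟩ : s = Sum.inl T ∧ v₂ = t ++ u₂ := by
          have h1 := congrArg (List.head?) hc2
          have h2 := congrArg (List.tail) hc2
          simp at h1 h2
          exact ⟨h1.symm, h2⟩
        subst hc1 hv₂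
        obtain ⟨y, rfl⟩ : ∃ y : List A, u₂ = y.map Sum.inr :=
          list_all_inr (fun s hs => hterm s (by simp [hs]))
        have hx : v₁ ++ u ++ (t ++ y.map Sum.inr) = (v₁ ++ u ++ t) ++ y.map Sum.inr := by simp
        rw [hx] at ht
        obtain ⟨w₁, w₂, l₁, l₂, rfl, t1, t2, rfl⟩ := ih ht
        obtain ⟨rfl, rfl⟩ := isTrace_terminal.1 t2
        refine ⟨w₁, w₂, (v₁ ++ u ++ t) :: l₁, [], rfl, ?_, isTrace_nil.2 rfl, ?_⟩
        · refine isTrace_cons.2 ⟨⟨T, u, v₁, t, hP, fun s hs => hterm s (by simp [hs]), rfl, rfl⟩, t1⟩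
        · simp [hx]

lemma isTrace_split_unique {u₁ u₂ : List (Vr ⊕ A)} {l₁ l₂ l₁' l₂' w₁ w₂ w₁' w₂'}
    (h₁ : IsTrace P u₁ l₁ w₁) (h₂ : IsTrace P u₂ l₂ w₂)
    (h₁' : IsTrace P u₁ l₁' w₁') (h₂' : IsTrace P u₂ l₂' w₂')
    (hL : l₂.map (u₁ ++ ·) ++ l₁.map (· ++ w₂.map Sum.inr) =
      l₂'.map (u₁ ++ ·) ++ l₁'.map (· ++ w₂'.map Sum.inr)) :
    w₁ = w₁' ∧ w₂ = w₂' ∧ l₁ = l₁' ∧ l₂ = l₂' := by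
  induction l₂ generalizing u₂ l₂' with
  | nil =>
    obtain rfl := isTrace_nil.1 h₂
    cases l₂' with
    | cons x l₂' => exact absurd (isTrace_cons.1 h₂').1 (no_rstep_terminal w₂)
    | nil =>
      obtain hw : (w₂).map Sum.inr = (w₂').map Sum.inr := isTrace_nil.1 h₂'
      obtain rfl : w₂ = w₂' := List.map_injective_iff.2 (fun a b => Sum.inr.inj) hw
      simp only [List.map_nil, List.nil_append] at hL
      have hl : l₁ = l₁' := by
        have : Function.Injective (fun m : List (Vr ⊕ A) => m ++ w₂.map Sum.inr) :=
          fun a b hab => List.append_left_injective _ hab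
        exact List.map_injective_iff.2 this hL
      subst hl
      exact ⟨h₁.word_eq h₁', rfl, rfl, rfl⟩
  | cons x l₂ ih =>
    obtain ⟨hs, ht⟩ := isTrace_cons.1 h₂
    cases l₂' with
    | nil =>
      obtain rfl := isTrace_nil.1 h₂'
      exact absurd hs (no_rstep_terminal w₂')
    | cons x' l₂'' =>
      obtain ⟨hs', ht'⟩ := isTrace_cons.1 h₂'
      simp only [List.map_cons, List.cons_append, List.cons.injEq] at hL
      obtain ⟨hxx, hL'⟩ := hL
      obtain rfl : x = x' := List.append_cancel_left hxx
      obtain ⟨e1, e2, e3, e4⟩ := ih ht ht' hL'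
      exact ⟨e1, e2, e3, by rw [e4]⟩

lemma isTrace_var {T : Vr} {L : List (List (Vr ⊕ A))} {w} :
    IsTrace P [Sum.inl T] L w ↔
      ∃ u L', (T, u) ∈ P ∧ L = u :: L' ∧ IsTrace P u L' w := by
  constructor
  · intro h
    cases L with
    | nil =>
      have := isTrace_nil.1 h
      have : (Sum.inl T : Vr ⊕ A) ∈ w.map Sum.inr := by rw [← this]; simp
      simp at this
    | cons x L' =>
      obtain ⟨hs, ht⟩ := isTrace_cons.1 h
      obtain ⟨T', u, v₁, v₂, hP, hterm, heq, rfl⟩ := hs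
      have hv : v₁ = [] ∧ (Sum.inl T : Vr ⊕ A) = Sum.inl T' ∧ v₂ = [] := by
        cases v₁ with
        | nil => simp_all
        | cons a v₁ =>
          simp only [List.cons_append] at heq
          have := congrArg List.length heq
          simp at this
      obtain ⟨rfl, hT, rfl⟩ := hv
      obtain rfl : T = T' := Sum.inl.inj hT
      exact ⟨u, L', hP, by simp, by simpa using ht⟩
  · rintro ⟨u, L', hP, rfl, ht⟩
    refine isTrace_cons.2 ⟨⟨T, u, [], [], hP, by simp, rfl, by simp⟩, ht⟩



lemma wordWeight_append {A : Type*} (μ : A → ℝ) (z : ℝ) (w₁ w₂ : List A) :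
    wordWeight μ z (w₁ ++ w₂) = wordWeight μ z w₁ * wordWeight μ z w₂ := by
  simp [wordWeight, pow_add]; ring

variable {Vr A : Type*} {P : Set (Vr × List (Vr ⊕ A))}

/-- The type of complete rightmost derivations ("traces") from `u`. -/
def TC (P : Set (Vr × List (Vr ⊕ A))) (u : List (Vr ⊕ A)) : Type _ :=
  {x : List A × List (List (Vr ⊕ A)) // IsTrace P u x.2 x.1}

def tcTerminal (y : List A) : TC P (y.map Sum.inr) :=
  ⟨(y, []), isTrace_nil.2 rfl⟩

instance (y : List A) : Unique (TC P (y.map Sum.inr)) where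
  default := tcTerminal y
  uniq := by
    rintro ⟨⟨w, l⟩, h⟩
    obtain ⟨rfl, rfl⟩ := isTrace_terminal.1 h
    rfl

/-- The combination map giving `TC (u₁ ++ u₂) ≃ TC u₁ × TC u₂`. -/
def tcCombine (u₁ u₂ : List (Vr ⊕ A)) : TC P u₁ × TC P u₂ → TC P (u₁ ++ u₂) :=
  fun q => ⟨(q.1.1.1 ++ q.2.1.1,
    (q.2.1.2).map (u₁ ++ ·) ++ (q.1.1.2).map (· ++ (q.2.1.1).map Sum.inr)),
    isTrace_combine q.1.2 q.2.2⟩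

lemma tcCombine_bijective (u₁ u₂ : List (Vr ⊕ A)) :
    Function.Bijective (tcCombine (P := P) u₁ u₂) := by
  constructor
  · rintro ⟨⟨⟨w₁, l₁⟩, h₁⟩, ⟨⟨w₂, l₂⟩, h₂⟩⟩ ⟨⟨⟨w₁', l₁'⟩, h₁'⟩, ⟨⟨w₂', l₂'⟩, h₂'⟩⟩ hq
    have hq' := congrArg (fun t : TC P (u₁ ++ u₂) => t.1) hq
    simp only [tcCombine, Prod.mk.injEq] at hq'
    obtain ⟨e1, e2, e3, e4⟩ := isTrace_split_unique h₁ h₂ h₁' h₂' hq'.2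
    subst e1; subst e2; subst e3; subst e4
    rfl
  · rintro ⟨⟨w, L⟩, h⟩
    obtain ⟨w₁, w₂, l₁, l₂, rfl, t1, t2, rfl⟩ := isTrace_split h
    exact ⟨⟨⟨⟨w₁, l₁⟩, t1⟩, ⟨⟨w₂, l₂⟩, t2⟩⟩, rfl⟩

def tcAppendEquiv (u₁ u₂ : List (Vr ⊕ A)) : TC P u₁ × TC P u₂ ≃ TC P (u₁ ++ u₂) :=
  Equiv.ofBijective _ (tcCombine_bijective u₁ u₂)

/-- The first-step map giving the production decomposition of `TC [inl T]`. -/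
def tcVar (T : Vr) :
    (Σ p : {p : Vr × List (Vr ⊕ A) // p ∈ P ∧ p.1 = T}, TC P p.1.2) → TC P [Sum.inl T] :=
  fun q => ⟨(q.2.1.1, q.1.1.2 :: q.2.1.2), isTrace_var.2
    ⟨q.1.1.2, q.2.1.2, by
      have h := q.1.2
      have h2 : ((T : Vr), (q.1.1 : Vr × List (Vr ⊕ A)).2) = q.1.1 :=
        Prod.ext_iff.2 ⟨h.2.symm, rfl⟩
      rw [h2]
      exact h.1, rfl, q.2.2⟩⟩

lemma tcVar_bijective (T : Vr) : Function.Bijective (tcVar (P := P) T) := by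
  constructor
  · rintro ⟨⟨⟨T₁, u⟩, hp, hT⟩, ⟨⟨w, L⟩, ht⟩⟩ ⟨⟨⟨T₂, u'⟩, hp', hT'⟩, ⟨⟨w', L'⟩, ht'⟩⟩ hq
    have hq' := congrArg (fun t : TC P [Sum.inl T] => t.1) hq
    simp only [tcVar, Prod.mk.injEq, List.cons.injEq] at hq'
    simp only at hT hT'
    subst hT; subst hT'
    obtain ⟨h1, h23⟩ := hq'
    obtain ⟨h2, h3⟩ := h23
    subst h1; subst h2; subst h3
    rfl
  · rintro ⟨⟨w, L⟩, h⟩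
    obtain ⟨u, L', hP, rfl, ht⟩ := isTrace_var.1 h
    exact ⟨Sigma.mk (⟨(T, u), ⟨hP, rfl⟩⟩ : {p : Vr × List (Vr ⊕ A) // p ∈ P ∧ p.1 = T})
      ⟨⟨w, L'⟩, ht⟩, rfl⟩

def tcVarEquiv (T : Vr) :
    (Σ p : {p : Vr × List (Vr ⊕ A) // p ∈ P ∧ p.1 = T}, TC P p.1.2) ≃ TC P [Sum.inl T] :=
  Equiv.ofBijective _ (tcVar_bijective T)

end Stmt13Aux


open Stmt13Aux in
/-- For an un-ambiguous context-free grammar without chain rules, the generating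
functions `f_T` converge absolutely for `μ(a)|z| < 1/|Σ|` and satisfy the
Chomsky–Schützenberger algebraic system
`f_T(z) = Pol_T(z; (f_U(z))_U) = Σ_{T ⊢ u} ζ(u)`, where `ζ(a) = μ(a) z` for
terminals and `ζ(U) = f_U(z)` for variables, extended multiplicatively. -/
theorem stmt13 {Vr A : Type*} [Fintype Vr] [Fintype A] [Nonempty A]
    (P : Set (Vr × List (Vr ⊕ A))) (hPfin : P.Finite) (S : Vr)
    (hunamb : UnAmbiguous P)
    (hnochain : ∀ p ∈ P, ¬ ∃ U : Vr, p.2 = [Sum.inl U])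
    (μ : A → ℝ) (hμpos : ∀ a, 0 < μ a)
    (z : ℝ) (hz : ∀ a : A, μ a * |z| < 1 / (Fintype.card A)) :
    (∀ T : Vr, Summable (fun w : List A =>
        Set.indicator (Lang P T) (wordWeight μ z) w)) ∧
    (∀ T : Vr, fgen P μ T z =
      ∑ p ∈ hPfin.toFinset.filter (fun p => p.1 = T),
        (p.2.map (Sum.elim (fun U => fgen P μ U z)
          (fun a => μ a * z))).prod) := by
  classical
  set g : A → ℝ := fun a => μ a * |z| with hgdef
  have hg : ∀ a, 0 ≤ g a := fun a => mul_nonneg (hμpos a).le (abs_nonneg z)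
  have hcard : (0:ℕ) < Fintype.card A := Fintype.card_pos
  have hsum : ∑ a, g a < 1 := by
    calc ∑ a, g a < ∑ _a : A, (1 / (Fintype.card A : ℝ)) :=
          Finset.sum_lt_sum_of_nonempty Finset.univ_nonempty (fun a _ => hz a)
    _ = 1 := by
          rw [Finset.sum_const]
          simp only [Finset.card_univ, nsmul_eq_mul]
          field_simp
  have hW : Summable (fun w : List A => (w.map g).prod) := summable_W g hg hsum
  have hWnn : ∀ w : List A, 0 ≤ (w.map g).prod := by
    intro w
    refine List.prod_nonneg ?_
    simp only [List.mem_map]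
    rintro x ⟨a, -, rfl⟩
    exact hg a
  have habs : ∀ w : List A, |wordWeight μ z w| = (w.map g).prod := by
    intro w
    have h1 : (w.map g).prod = (w.map μ).prod * |z| ^ w.length := by
      rw [hgdef]
      rw [List.prod_map_mul (f := μ) (g := fun _ => |z|)]
      congr 1
      rw [show (List.map (fun _ => |z|) w) = List.replicate w.length |z| from
        List.map_const', List.prod_replicate]
    rw [wordWeight, abs_mul, abs_pow, h1]
    congr 1
    refine abs_of_nonneg (List.prod_nonneg ?_)
    simp only [List.mem_map]
    rintro x ⟨a, -, rfl⟩
    exact (hμpos a).le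
  -- Part 1 : summability of indicators of any set of words
  have hind : ∀ s : Set (List A), Summable (Set.indicator s (wordWeight μ z)) := by
    intro s
    rw [← summable_abs_iff]
    refine hW.of_nonneg_of_le (fun w => abs_nonneg _) (fun w => ?_)
    by_cases hw : w ∈ s
    · rw [Set.indicator_of_mem hw, habs]
    · rw [Set.indicator_of_notMem hw]
      simpa using hWnn w
  -- injectivity of the word map on traces from a single variable
  have hinj : ∀ U : Vr, Function.Injective (fun t : TC P [Sum.inl U] => t.1.1) := by
    intro U t t' h
    simp only at h
    have h1 := t.2
    have h2 := t'.2
    have hl := hunamb U t.1.1 t.1.2 t'.1.2 h1.1 h1.2 h2.1 (by rw [h2.2, h])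
    exact Subtype.ext (Prod.ext_iff.2 ⟨h, hl⟩)
  have hsummW : ∀ U : Vr, Summable (fun t : TC P [Sum.inl U] => ((t.1.1.map g)).prod) :=
    fun U => hW.comp_injective (hinj U)
  have hlang : ∀ (U : Vr) (w : List A),
      w ∈ Lang P U ↔ ∃ l, IsTrace P [Sum.inl U] l w := by
    intro U w
    constructor
    · intro h
      obtain ⟨l, hc, hl⟩ := List.exists_isChain_cons_of_relationReflTransGen h
      exact ⟨l, hc, hl⟩
    · rintro ⟨l, hc, hl⟩
      exact List.relationReflTransGen_of_exists_isChain_cons l hc hl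
  have hfg : ∀ U : Vr, fgen P μ U z = ∑' t : TC P [Sum.inl U], wordWeight μ z t.1.1 := by
    intro U
    rw [fgen]
    refine tsum_eq_tsum_of_ne_zero_bij (fun t => t.1.1.1) ?_ ?_ ?_
    · intro t t' h
      exact Subtype.ext (hinj U h)
    · intro w hw
      have hwL : w ∈ Lang P U := by
        by_contra hc
        exact hw (Set.indicator_of_notMem hc _)
      obtain ⟨l, hl⟩ := (hlang U w).1 hwL
      have hw' : Set.indicator (Lang P U) (wordWeight μ z) w ≠ 0 := hw
      rw [Set.indicator_of_mem hwL] at hw'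
      exact ⟨⟨⟨(w, l), hl⟩, hw'⟩, rfl⟩
    · intro t
      rw [Set.indicator_of_mem ((hlang U _).2 ⟨t.1.1.2, t.1.2⟩)]
  -- weight summability on traces from a single variable
  have hsumm1 : ∀ U : Vr, Summable (fun t : TC P [Sum.inl U] => wordWeight μ z t.1.1) := by
    intro U
    rw [← summable_abs_iff]
    exact (hsummW U).congr (fun t => (habs t.1.1).symm)
  -- the product step
  have hstep : ∀ u₁ u₂ : List (Vr ⊕ A),
      Summable (fun t : TC P u₁ => ((t.1.1.map g)).prod) →
      Summable (fun t : TC P u₂ => ((t.1.1.map g)).prod) →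
      Summable (fun t : TC P (u₁ ++ u₂) => ((t.1.1.map g)).prod) ∧
      (∑' t : TC P (u₁ ++ u₂), wordWeight μ z t.1.1 =
        (∑' t : TC P u₁, wordWeight μ z t.1.1) *
        (∑' t : TC P u₂, wordWeight μ z t.1.1)) := by
    intro u₁ u₂ h1 h2
    have hprodW : Summable (fun q : TC P u₁ × TC P u₂ =>
        ((q.1.1.1.map g)).prod * ((q.2.1.1.map g)).prod) :=
      h1.mul_of_nonneg h2 (fun t => hWnn _) (fun t => hWnn _)
    have hq : ∀ q : TC P u₁ × TC P u₂,
        ((tcAppendEquiv (P := P) u₁ u₂) q).1.1 = q.1.1.1 ++ q.2.1.1 := fun q => rfl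
    constructor
    · refine ((tcAppendEquiv (P := P) u₁ u₂).summable_iff
        (f := fun t : TC P (u₁ ++ u₂) => ((t.1.1.map g)).prod)).1 (hprodW.congr ?_)
      intro q
      show _ = ((((tcAppendEquiv (P := P) u₁ u₂) q).1.1).map g).prod
      rw [hq, List.map_append, List.prod_append]
    · rw [← (tcAppendEquiv (P := P) u₁ u₂).tsum_eq
        (fun t : TC P (u₁ ++ u₂) => wordWeight μ z t.1.1)]
      have he : ∀ q : TC P u₁ × TC P u₂,
          wordWeight μ z (((tcAppendEquiv (P := P) u₁ u₂) q).1.1) =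
          wordWeight μ z q.1.1.1 * wordWeight μ z q.2.1.1 := by
        intro q
        rw [hq]
        exact wordWeight_append μ z _ _
      rw [tsum_congr he]
      have hsp : Summable (fun q : TC P u₁ × TC P u₂ =>
          wordWeight μ z q.1.1.1 * wordWeight μ z q.2.1.1) := by
        rw [← summable_abs_iff]
        refine hprodW.congr (fun q => ?_)
        rw [abs_mul, habs, habs]
      have hw2 : Summable (fun t : TC P u₂ => wordWeight μ z t.1.1) :=
        summable_abs_iff.1 (h2.congr (fun t => (habs t.1.1).symm))
      have hpr := Summable.tsum_prod' (f := fun q : TC P u₁ × TC P u₂ =>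
        wordWeight μ z q.1.1.1 * wordWeight μ z q.2.1.1) hsp
        (fun t₁ => hw2.mul_left (wordWeight μ z t₁.1.1))
      rw [hpr]
      simp_rw [tsum_mul_left]
      rw [tsum_mul_right]
  -- singleton trace types over terminal words
  have hterm_sum : ∀ y : List A,
      (∑' t : TC P (y.map Sum.inr), wordWeight μ z t.1.1 = wordWeight μ z y) ∧
      Summable (fun t : TC P (y.map Sum.inr) => ((t.1.1.map g)).prod) := by
    intro y
    constructor
    · rw [tsum_eq_single (default : TC P (y.map Sum.inr))
        (fun b hb => absurd (Unique.eq_default b) hb)]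
      rfl
    · exact Summable.of_finite
  -- the per-list lemma
  have hsing : ∀ s : Vr ⊕ A, Summable (fun t : TC P [s] => ((t.1.1.map g)).prod) := by
    intro s
    cases s with
    | inl U => exact hsummW U
    | inr a => exact (hterm_sum [a]).2
  have hlist : ∀ u : List (Vr ⊕ A),
      Summable (fun t : TC P u => ((t.1.1.map g)).prod) ∧
      (∑' t : TC P u, wordWeight μ z t.1.1 =
        (u.map (fun s => ∑' t : TC P [s], wordWeight μ z t.1.1)).prod) := by
    intro u
    induction u with
    | nil =>
      refine ⟨(hterm_sum []).2, ?_⟩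
      have h0 : (∑' t : TC P ([] : List (Vr ⊕ A)), wordWeight μ z t.1.1) =
          wordWeight μ z ([] : List A) := (hterm_sum []).1
      rw [h0]
      simp [wordWeight]
    | cons s u ih =>
      obtain ⟨ihs, ihp⟩ := ih
      have h := hstep [s] u (hsing s) ihs
      refine ⟨h.1, ?_⟩
      have h2 : (∑' t : TC P (s :: u), wordWeight μ z t.1.1) =
          (∑' t : TC P [s], wordWeight μ z t.1.1) *
          (∑' t : TC P u, wordWeight μ z t.1.1) := h.2
      rw [h2, ihp]
      simp
  -- evaluation of singleton sums
  have hsingval : ∀ s : Vr ⊕ A,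
      (∑' t : TC P [s], wordWeight μ z t.1.1) =
        Sum.elim (fun U => fgen P μ U z) (fun a => μ a * z) s := by
    intro s
    cases s with
    | inl U => exact (hfg U).symm
    | inr a =>
      have h0 : (∑' t : TC P [Sum.inr a], wordWeight μ z t.1.1) =
          wordWeight μ z [a] := (hterm_sum [a]).1
      rw [h0]
      simp [wordWeight]
  refine ⟨fun T => hind _, fun T => ?_⟩
  -- the production decomposition
  rw [hfg T, ← (tcVarEquiv (P := P) T).tsum_eq
    (fun t : TC P [Sum.inl T] => wordWeight μ z t.1.1)]
  have htot0 : Summable ((fun t : TC P [Sum.inl T] => wordWeight μ z t.1.1) ∘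
      (tcVarEquiv (P := P) T)) :=
    ((tcVarEquiv (P := P) T).summable_iff
      (f := fun t : TC P [Sum.inl T] => wordWeight μ z t.1.1)).2 (hsumm1 T)
  have htot : Summable (fun q : Σ p : {p : Vr × List (Vr ⊕ A) // p ∈ P ∧ p.1 = T},
      TC P p.1.2 => wordWeight μ z ((tcVarEquiv (P := P) T) q).1.1) :=
    htot0.congr (fun q => rfl)
  have hfib : ∀ p : {p : Vr × List (Vr ⊕ A) // p ∈ P ∧ p.1 = T},
      Summable (fun t : TC P p.1.2 => wordWeight μ z t.1.1) :=
    fun p => summable_abs_iff.1 (((hlist p.1.2).1).congr (fun t => (habs t.1.1).symm))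
  rw [Summable.tsum_sigma' (f := fun q : Σ p : {p : Vr × List (Vr ⊕ A) // p ∈ P ∧ p.1 = T},
      TC P p.1.2 => wordWeight μ z ((tcVarEquiv (P := P) T) q).1.1)
    (fun p => (hfib p).congr (fun t => rfl)) htot]
  have hfibval : ∀ p : {p : Vr × List (Vr ⊕ A) // p ∈ P ∧ p.1 = T},
      (∑' t : TC P p.1.2, wordWeight μ z
        ((tcVarEquiv (P := P) T) ⟨p, t⟩).1.1) =
      ((p : Vr × List (Vr ⊕ A)).2.map
        (Sum.elim (fun U => fgen P μ U z) (fun a => μ a * z))).prod := by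
    intro p
    have : ∀ t : TC P p.1.2,
        wordWeight μ z ((tcVarEquiv (P := P) T) ⟨p, t⟩).1.1 =
        wordWeight μ z t.1.1 := fun t => rfl
    rw [tsum_congr this, (hlist p.1.2).2]
    congr 1
    exact List.map_congr_left (fun s _ => hsingval s)
  rw [tsum_congr hfibval]
  -- convert the tsum over the finite subtype into the Finset sum
  haveI : Fintype {p : Vr × List (Vr ⊕ A) // p ∈ P ∧ p.1 = T} :=
    Set.Finite.fintype (s := {p | p ∈ P ∧ p.1 = T}) (hPfin.subset (fun x hx => hx.1))
  rw [tsum_fintype]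
  exact (Finset.sum_subtype (p := fun p : Vr × List (Vr ⊕ A) => p ∈ P ∧ p.1 = T)
    (hPfin.toFinset.filter (fun p => p.1 = T))
    (fun p => by simp [hPfin.mem_toFinset])
    (fun p => (p.2.map
      (Sum.elim (fun U => fgen P μ U z) (fun a => μ a * z))).prod)).symm


end
end

section
/- Let G be a group, H ≤ G with [G:H] < ∞, K ≤ H, and suppose the Schreier graph X(G,K,ψ') (for a symmetric semigroup presentation ψ' of G) and X(H,K,ψ) (for one of H) have graph metrics d' and d respectively on their vertex sets (right K-cosets). Then there are integers M_1, M_2 ≥ 1 and N ≥ 0, depending only on (H,ψ) and (G,ψ'), such that every vertex of X(G,K,ψ') is within d'-distance N of a vertex of X(H,K,ψ), and for all vertices y_1,y_2 of X(H,K,ψ): d'(y_1,y_2)/M_1 ≤ d(y_1,y_2) ≤ M_2 d'(y_1,y_2). -/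
noncomputable section

/-- The Schreier graph distance between the cosets `Kg₁` and `Kg₂` for the
semigroup presentation `ψ`: least length of a word `w` over the alphabet with
`Kg₁ψ(w) = Kg₂`. -/
def schreierDist {G : Type*} [Group G] (K : Subgroup G) {A : Type*}
    (ψ : A → G) (g₁ g₂ : G) : ℕ :=
  sInf {n : ℕ | ∃ w : List A, w.length = n ∧ g₁ * (w.map ψ).prod * g₂⁻¹ ∈ K}

/-- Let `K ≤ H ≤ G` with `[G:H] < ∞`, and let `ψ, ψ'` be symmetric semigroup
presentations of `H` and `G` respectively. Then there are `M₁, M₂ ≥ 1` and `N ≥ 0`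
such that every vertex of the Schreier graph `X(G,K,ψ')` is within `d'`-distance
`N` of a vertex of `X(H,K,ψ)`, and on the vertices of `X(H,K,ψ)` one has
`d'(y₁,y₂)/M₁ ≤ d(y₁,y₂) ≤ M₂ d'(y₁,y₂)`. -/
theorem stmt14 {G : Type*} [Group G] (H : Subgroup G) [H.FiniteIndex]
    (K : Subgroup G) (hKH : K ≤ H)
    {A A' : Type*} [Fintype A] [Fintype A']
    (ψ : A → G) (ψ' : A' → G)
    (hψH : ∀ a, ψ a ∈ H)
    (hψgen : ∀ h ∈ H, ∃ w : List A, (w.map ψ).prod = h)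
    (hψsymm : ∃ ι : A → A, Function.Involutive ι ∧ ∀ a, ψ (ι a) = (ψ a)⁻¹)
    (hψ'gen : ∀ g : G, ∃ w : List A', (w.map ψ').prod = g)
    (hψ'symm : ∃ ι' : A' → A', Function.Involutive ι' ∧
      ∀ a, ψ' (ι' a) = (ψ' a)⁻¹) :
    ∃ M₁ M₂ N : ℕ, 1 ≤ M₁ ∧ 1 ≤ M₂ ∧
      (∀ g : G, ∃ h ∈ H, schreierDist K ψ' g h ≤ N) ∧
      ∀ h₁ ∈ H, ∀ h₂ ∈ H,
        schreierDist K ψ' h₁ h₂ ≤ M₁ * schreierDist K ψ h₁ h₂ ∧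
        schreierDist K ψ h₁ h₂ ≤ M₂ * schreierDist K ψ' h₁ h₂ := by
  classical
  haveI : Fintype (G ⧸ H) := Fintype.ofFinite _
  -- a representative of each left coset, with the trivial coset represented by 1
  set rep : G ⧸ H → G := fun q => if q = ((1 : G) : G ⧸ H) then 1 else q.out with hrep
  have hrep_spec : ∀ q : G ⧸ H, (rep q : G ⧸ H) = q := by
    intro q
    by_cases h : q = ((1 : G) : G ⧸ H)
    · simp [hrep, h]
    · simp [hrep, h, QuotientGroup.out_eq']
  -- "right-coset representative" of g : t g depends only on Hg, is 1 on H
  set t : G → G := fun g => (rep ((g⁻¹ : G) : G ⧸ H))⁻¹ with ht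
  have htH : ∀ g : G, g * (t g)⁻¹ ∈ H := by
    intro g
    have h0 := hrep_spec ((g⁻¹ : G) : G ⧸ H)
    have h1 : (rep ((g⁻¹ : G) : G ⧸ H))⁻¹ * g⁻¹ ∈ H := (QuotientGroup.eq).mp h0
    have h2 := H.inv_mem h1
    simpa [ht, mul_assoc] using h2
  have ht1 : ∀ g ∈ H, t g = 1 := by
    intro g hg
    have h0 : ((g⁻¹ : G) : G ⧸ H) = ((1 : G) : G ⧸ H) :=
      (QuotientGroup.eq).mpr (by simpa using hg)
    simp [ht, h0, hrep]
  -- words over A' for the representatives (used for the N-density statement)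
  choose Wr hWr using fun q : G ⧸ H => hψ'gen (rep q)
  set N : ℕ := Finset.univ.sup fun q : G ⧸ H => (Wr q).length with hN
  -- words over A' for each ψ-generator
  choose V hV using fun a : A => hψ'gen (ψ a)
  set M₁ : ℕ := max 1 (Finset.univ.sup fun a : A => (V a).length) with hM₁
  -- words over A for the bounded "H-increments"
  set δ : G ⧸ H → G ⧸ H → A' → G := fun q q' a => (rep q)⁻¹ * ψ' a * rep q' with hδ
  set U : G ⧸ H → G ⧸ H → A' → List A := fun q q' a =>
    if h : δ q q' a ∈ H then Classical.choose (hψgen _ h) else [] with hU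
  have hU_spec : ∀ q q' a, δ q q' a ∈ H → ((U q q' a).map ψ).prod = δ q q' a := by
    intro q q' a h
    simp only [hU, dif_pos h]
    exact Classical.choose_spec (hψgen _ h)
  set C : ℕ := Finset.univ.sup fun x : (G ⧸ H) × (G ⧸ H) × A' => (U x.1 x.2.1 x.2.2).length
    with hC
  have hUC : ∀ q q' a, (U q q' a).length ≤ C := by
    intro q q' a
    exact Finset.le_sup (f := fun x : (G ⧸ H) × (G ⧸ H) × A' => (U x.1 x.2.1 x.2.2).length)
      (Finset.mem_univ (q, q', a))
  set M₂ : ℕ := max 1 C with hM₂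
  refine ⟨M₁, M₂, N, le_max_left _ _, le_max_left _ _, ?_, ?_⟩
  · -- density
    intro g
    refine ⟨g * (t g)⁻¹, htH g, ?_⟩
    have hmem : (Wr ((g⁻¹ : G) : G ⧸ H)).length ∈
        {n : ℕ | ∃ w : List A', w.length = n ∧
          g * (w.map ψ').prod * (g * (t g)⁻¹)⁻¹ ∈ K} := by
      refine ⟨Wr ((g⁻¹ : G) : G ⧸ H), rfl, ?_⟩
      rw [hWr]
      have h0 : g * rep ((g⁻¹ : G) : G ⧸ H) * (g * (t g)⁻¹)⁻¹ = 1 := by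
        simp only [ht, inv_inv]; group
      rw [h0]; exact K.one_mem
    calc schreierDist K ψ' g (g * (t g)⁻¹) ≤ (Wr ((g⁻¹ : G) : G ⧸ H)).length :=
          Nat.sInf_le hmem
      _ ≤ N := Finset.le_sup (f := fun q : G ⧸ H => (Wr q).length) (Finset.mem_univ _)
  · intro h₁ hh₁ h₂ hh₂
    -- nonemptiness of both distance sets
    have hSne : ∃ w : List A, h₁ * (w.map ψ).prod * h₂⁻¹ ∈ K := by
      obtain ⟨w, hw⟩ := hψgen (h₁⁻¹ * h₂) (H.mul_mem (H.inv_mem hh₁) hh₂)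
      refine ⟨w, ?_⟩
      rw [hw]
      have h0 : h₁ * (h₁⁻¹ * h₂) * h₂⁻¹ = 1 := by group
      rw [h0]; exact K.one_mem
    have hS'ne : ∃ w : List A', h₁ * (w.map ψ').prod * h₂⁻¹ ∈ K := by
      obtain ⟨w, hw⟩ := hψ'gen (h₁⁻¹ * h₂)
      refine ⟨w, ?_⟩
      rw [hw]
      have h0 : h₁ * (h₁⁻¹ * h₂) * h₂⁻¹ = 1 := by group
      rw [h0]; exact K.one_mem
    constructor
    · -- d' ≤ M₁ * d
      obtain ⟨w, hwlen, hwmem⟩ := Nat.sInf_mem (s :=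
        {n : ℕ | ∃ w : List A, w.length = n ∧ h₁ * (w.map ψ).prod * h₂⁻¹ ∈ K})
        ⟨_, _, rfl, hSne.choose_spec⟩
      -- translate w over A'
      have trans : ∀ w : List A, ∃ w' : List A',
          ((w'.map ψ').prod = (w.map ψ).prod) ∧ w'.length ≤ M₁ * w.length := by
        intro w
        induction w with
        | nil => exact ⟨[], by simp, by simp⟩
        | cons a w ih =>
          obtain ⟨w', hw'1, hw'2⟩ := ih
          refine ⟨V a ++ w', ?_, ?_⟩
          · simp [hV, hw'1]
          · have h1 : (V a).length ≤ M₁ :=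
              le_trans (Finset.le_sup (f := fun a : A => (V a).length) (Finset.mem_univ a))
                (le_max_right _ _)
            simp only [List.length_append, List.length_cons, Nat.mul_succ]
            omega
      obtain ⟨w', hw'1, hw'2⟩ := trans w
      calc schreierDist K ψ' h₁ h₂ ≤ w'.length :=
            Nat.sInf_le ⟨w', rfl, by rw [hw'1]; exact hwmem⟩
        _ ≤ M₁ * w.length := hw'2
        _ = M₁ * schreierDist K ψ h₁ h₂ := by rw [hwlen]; rfl
    · -- d ≤ M₂ * d'
      obtain ⟨w, hwlen, hwmem⟩ := Nat.sInf_mem (s :=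
        {n : ℕ | ∃ w : List A', w.length = n ∧ h₁ * (w.map ψ').prod * h₂⁻¹ ∈ K})
        ⟨_, _, rfl, hS'ne.choose_spec⟩
      -- key induction: follow the ψ'-path, replacing H-increments by ψ-words
      have key : ∀ (w : List A') (g : G), ∃ u : List A,
          ((u.map ψ).prod
            = (g * (t g)⁻¹)⁻¹ * (g * (w.map ψ').prod * (t (g * (w.map ψ').prod))⁻¹)) ∧
          u.length ≤ C * w.length := by
        intro w
        induction w with
        | nil =>
          intro g
          exact ⟨[], by simp only [List.map_nil, List.prod_nil, mul_one]; group, by simp⟩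
        | cons a w ih =>
          intro g
          obtain ⟨u', hu'1, hu'2⟩ := ih (g * ψ' a)
          have e : δ ((g⁻¹ : G) : G ⧸ H) (((g * ψ' a)⁻¹ : G) : G ⧸ H) a
              = (g * (t g)⁻¹)⁻¹ * (g * ψ' a * (t (g * ψ' a))⁻¹) := by
            simp only [hδ, ht, inv_inv]; group
          have hδH : δ ((g⁻¹ : G) : G ⧸ H) (((g * ψ' a)⁻¹ : G) : G ⧸ H) a ∈ H := by
            rw [e]
            exact H.mul_mem (H.inv_mem (htH g)) (htH (g * ψ' a))
          refine ⟨U ((g⁻¹ : G) : G ⧸ H) (((g * ψ' a)⁻¹ : G) : G ⧸ H) a ++ u', ?_, ?_⟩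
          · rw [List.map_append, List.prod_append, hU_spec _ _ _ hδH, e, hu'1]
            simp only [List.map_cons, List.prod_cons, ← mul_assoc]
            group
          · have := hUC ((g⁻¹ : G) : G ⧸ H) (((g * ψ' a)⁻¹ : G) : G ⧸ H) a
            simp only [List.length_append, List.length_cons, Nat.mul_succ]
            omega
      obtain ⟨u, hu1, hu2⟩ := key w h₁
      have hend : h₁ * (w.map ψ').prod ∈ H := by
        have h3 : h₁ * (w.map ψ').prod * h₂⁻¹ ∈ H := hKH hwmem
        have h4 := H.mul_mem h3 hh₂
        simpa [mul_assoc] using h4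
      have hu1' : (u.map ψ).prod = h₁⁻¹ * (h₁ * (w.map ψ').prod) := by
        rw [hu1, ht1 h₁ hh₁, ht1 _ hend]; simp
      have humem : h₁ * (u.map ψ).prod * h₂⁻¹ ∈ K := by
        rw [hu1']
        simpa [mul_assoc] using hwmem
      calc schreierDist K ψ h₁ h₂ ≤ u.length := Nat.sInf_le ⟨u, rfl, humem⟩
        _ ≤ C * w.length := hu2
        _ ≤ M₂ * w.length := Nat.mul_le_mul_right _ (le_max_right _ _)
        _ = M₂ * schreierDist K ψ' h₁ h₂ := by rw [hwlen]; rfl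
end
end
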